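/- arXiv:1703.02078 — 2 statements merged into one kernel-verified Lean document; each statement's English description precedes it below -/
import Mathlib

section
/- Let (Ω, F, P) be a probability space, let G₁ and G₂ be sub-σ-algebras of F, let E₁, E₂ ∈ F be events, and let α ∈ [0,1]. Suppose the conditional probability of E₂ given G₁ is at most α/2 almost everywhere (i.e., the conditional expectation E[1_{E₂} | G₁] ≤ α/2 a.e.) and likewise the conditional expectation E[1_{E₁} | G₂] ≤ α/2 a.e. Then P(E₁ ∪ E₂) ≤ α. (This is Proposition 1 of the paper: cross-screening strongly controls the family-wise error rate, where E₁ and E₂ are the events that at least one true null hypothesis is rejected using the first and second half-sample respectively, G₁ is the σ-algebra generated by the first half-sample and G₂ by the second half-sample.) -/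
open MeasureTheory ProbabilityTheory

lemma meas_le_of_condexp_le
    {Ω : Type*} (G : MeasurableSpace Ω) {F : MeasurableSpace Ω}
    (P : Measure Ω) [IsProbabilityMeasure P] (hG : G ≤ F)
    (E : Set Ω) (hE : MeasurableSet[F] E) (c : ℝ)
    (h : MeasureTheory.condExp G P (E.indicator (fun _ => (1 : ℝ))) ≤ᵐ[P] fun _ => c) :
    (P E).toReal ≤ c := by
  set f : Ω → ℝ := E.indicator (fun _ => (1 : ℝ)) with hf
  have hint : Integrable f P := (integrable_const (1 : ℝ)).indicator hE
  have h1 : ∫ ω, MeasureTheory.condExp G P f ω ∂P = ∫ ω, f ω ∂P :=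
    integral_condExp hG
  have h2 : ∫ ω, f ω ∂P = (P E).toReal := by
    rw [hf, integral_indicator_const _ hE]; simp; rfl
  have h3 : ∫ ω, MeasureTheory.condExp G P f ω ∂P ≤ ∫ _ω, c ∂P :=
    integral_mono_ae integrable_condExp (integrable_const c) h
  simpa [h1, h2] using h3

/-- Proposition 1 (cross-screening strongly controls the family-wise error rate):
if the conditional probability of `E₂` given the sub-σ-algebra `G₁` is at most `α/2`
a.e., and the conditional probability of `E₁` given `G₂` is at most `α/2` a.e., then
`P(E₁ ∪ E₂) ≤ α`. -/
theorem cross_screening_fwer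
    {Ω : Type*} {F : MeasurableSpace Ω} (P : Measure Ω) [IsProbabilityMeasure P]
    (G₁ G₂ : MeasurableSpace Ω) (hG₁ : G₁ ≤ F) (hG₂ : G₂ ≤ F)
    (E₁ E₂ : Set Ω) (hE₁ : MeasurableSet E₁) (hE₂ : MeasurableSet E₂)
    (α : ℝ) (hα0 : 0 ≤ α) (hα1 : α ≤ 1)
    (h₂ : P[E₂.indicator (fun _ => (1 : ℝ)) | G₁] ≤ᵐ[P] fun _ => α / 2)
    (h₁ : P[E₁.indicator (fun _ => (1 : ℝ)) | G₂] ≤ᵐ[P] fun _ => α / 2) :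
    P (E₁ ∪ E₂) ≤ ENNReal.ofReal α := by
  have k₁ : (P E₁).toReal ≤ α / 2 := meas_le_of_condexp_le G₂ P hG₂ E₁ (hG₂ _ hE₁) _ h₁
  have k₂ : (P E₂).toReal ≤ α / 2 := meas_le_of_condexp_le G₁ P hG₁ E₂ (hG₂ _ hE₂) _ h₂
  have hfin₁ : P E₁ ≠ ⊤ := measure_ne_top _ _
  have hfin₂ : P E₂ ≠ ⊤ := measure_ne_top _ _
  calc P (E₁ ∪ E₂) ≤ P E₁ + P E₂ := measure_union_le _ _
    _ ≤ ENNReal.ofReal (α / 2) + ENNReal.ofReal (α / 2) := by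
        gcongr
        · rw [← ENNReal.ofReal_toReal hfin₁]; exact ENNReal.ofReal_le_ofReal k₁
        · rw [← ENNReal.ofReal_toReal hfin₂]; exact ENNReal.ofReal_le_ofReal k₂
    _ = ENNReal.ofReal α := by
        rw [← ENNReal.ofReal_add (by linarith) (by linarith)]; ring_nf
end

section
/- Let μ, μ' ∈ ℝ, σ > 0, σ' > 0, and let X be a random variable with distribution N(μ', σ'²). Then E[1 − Φ((X − μ)/σ)] = Φ((μ − μ')/√(σ² + σ'²)). (This is the exact normal version of the paper's expected P-value formula, equation (8), due to Sackrowitz and Samuel-Cahn: with μ = κ Σ_i q_i, σ² = κ(1−κ) Σ_i q_i², μ' = κ' Σ_i q_i, σ'² = κ'(1−κ') Σ_i q_i², EPV = Φ[(κ − κ') Σ_i q_i / √{(κ(1−κ) + κ'(1−κ')) Σ_i q_i²}].) -/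
open MeasureTheory ProbabilityTheory Real Set Filter Metric
open scoped NNReal ENNReal Topology

/-- The standard normal cumulative distribution function Φ. -/
noncomputable def stdGaussianCDF (t : ℝ) : ℝ :=
  (gaussianReal 0 1 (Set.Iic t)).toReal

namespace EPV

noncomputable def phi : ℝ → ℝ := gaussianPDFReal 0 1

lemma phi_def (z : ℝ) : phi z = (Real.sqrt (2 * π))⁻¹ * Real.exp (- z ^ 2 / 2) := by
  simp [phi, gaussianPDFReal]

lemma phi_nonneg (z : ℝ) : 0 ≤ phi z := gaussianPDFReal_nonneg _ _ _

lemma phi_cont : Continuous phi := by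
  have : phi = fun z => (Real.sqrt (2 * π))⁻¹ * Real.exp (- z ^ 2 / 2) := funext phi_def
  rw [this]; continuity

lemma phi_int : Integrable phi := integrable_gaussianPDFReal 0 1

lemma phi_total : ∫ z, phi z = 1 := integral_gaussianPDFReal_eq_one 0 one_ne_zero

lemma phi_even (z : ℝ) : phi (-z) = phi z := by simp [phi_def]

lemma phi_le (z : ℝ) : phi z ≤ (Real.sqrt (2 * π))⁻¹ := by
  rw [phi_def]
  have h1 : Real.exp (- z ^ 2 / 2) ≤ 1 := by
    rw [Real.exp_le_one_iff]; nlinarith [sq_nonneg z]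
  have h2 : (0:ℝ) ≤ (Real.sqrt (2 * π))⁻¹ := by positivity
  nlinarith

lemma Phi_eq (t : ℝ) : stdGaussianCDF t = ∫ z in Iic t, phi z := by
  rw [stdGaussianCDF, gaussianReal_apply_eq_integral 0 one_ne_zero]
  exact ENNReal.toReal_ofReal (setIntegral_nonneg measurableSet_Iic fun z _ => phi_nonneg z)

lemma Phi_nonneg (t : ℝ) : 0 ≤ stdGaussianCDF t :=
  (Phi_eq t) ▸ setIntegral_nonneg measurableSet_Iic fun z _ => phi_nonneg z

lemma Phi_le_one (t : ℝ) : stdGaussianCDF t ≤ 1 := by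
  rw [stdGaussianCDF]
  exact ENNReal.toReal_le_of_le_ofReal one_pos.le (by simpa using prob_le_one)

lemma Phi_hasDeriv (t : ℝ) : HasDerivAt stdGaussianCDF (phi t) t := by
  have key : stdGaussianCDF = fun u => stdGaussianCDF 0 + ∫ z in (0:ℝ)..u, phi z := by
    funext u
    rw [Phi_eq, Phi_eq]
    have h := intervalIntegral.integral_Iic_sub_Iic (μ := volume) (f := phi)
      phi_int.integrableOn phi_int.integrableOn (a := 0) (b := u)
    linarith
  rw [key]
  exact (intervalIntegral.integral_hasDerivAt_right phi_int.intervalIntegrable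
    (phi_cont.stronglyMeasurableAtFilter _ _) phi_cont.continuousAt).const_add _

lemma Phi_cont : Continuous stdGaussianCDF :=
  continuous_iff_continuousAt.mpr fun t => (Phi_hasDeriv t).continuousAt

lemma one_sub_Phi (t : ℝ) : 1 - stdGaussianCDF t = stdGaussianCDF (-t) := by
  have hsplit : (∫ z in Iic t, phi z) + ∫ z in Ioi t, phi z = 1 := by
    rw [← phi_total, ← Set.compl_Iic]
    exact integral_add_compl measurableSet_Iic phi_int
  have hsym : stdGaussianCDF (-t) = ∫ z in Ioi t, phi z := by
    rw [Phi_eq, ← integral_comp_neg_Ioi]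
    simp_rw [phi_even]
  rw [hsym, Phi_eq]
  linarith

lemma Phi_tendsto_atBot : Tendsto stdGaussianCDF atBot (𝓝 0) := by
  have h : Tendsto (fun t => ∫ z, Set.indicator (Iic t) phi z) atBot (𝓝 0) := by
    have := MeasureTheory.tendsto_integral_filter_of_dominated_convergence
      (μ := (volume : Measure ℝ)) (F := fun t z => Set.indicator (Iic t) phi z)
      (f := fun _ => (0:ℝ)) phi
      (Eventually.of_forall fun t =>
        (phi_cont.aestronglyMeasurable).indicator measurableSet_Iic)
      (Eventually.of_forall fun t => ae_of_all _ fun z => by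
        by_cases hz : z ∈ Iic t <;>
          simp [Set.indicator_apply, hz, abs_of_nonneg (phi_nonneg z), phi_nonneg z])
      phi_int
      (ae_of_all _ fun z => by
        have hev : ∀ᶠ t in atBot, Set.indicator (Iic t) phi z = 0 := by
          filter_upwards [eventually_lt_atBot z] with t ht
          simp [Set.indicator_apply, not_le.mpr ht]
        exact Tendsto.congr' (hev.mono fun t h => h.symm) tendsto_const_nhds)
    simpa using this
  have heq : ∀ t, stdGaussianCDF t = ∫ z, Set.indicator (Iic t) phi z := fun t => by
    rw [integral_indicator measurableSet_Iic, Phi_eq]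
  exact Tendsto.congr (fun t => (heq t).symm) h

lemma conv_density (μ' σ σ' c x : ℝ) (hσ : 0 < σ) (hσ' : 0 < σ') :
    σ⁻¹ * phi ((c - x) / σ) * gaussianPDFReal μ' (Real.toNNReal (σ' ^ 2)) x
      = (Real.sqrt (σ ^ 2 + σ' ^ 2))⁻¹ * phi ((c - μ') / Real.sqrt (σ ^ 2 + σ' ^ 2))
        * gaussianPDFReal ((σ' ^ 2 * c + σ ^ 2 * μ') / (σ ^ 2 + σ' ^ 2))
            (Real.toNNReal (σ ^ 2 * σ' ^ 2 / (σ ^ 2 + σ' ^ 2))) x := by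
  set s := Real.sqrt (σ ^ 2 + σ' ^ 2) with hs_def
  set τ2 : ℝ := σ ^ 2 * σ' ^ 2 / (σ ^ 2 + σ' ^ 2) with hτ2_def
  set m : ℝ := (σ' ^ 2 * c + σ ^ 2 * μ') / (σ ^ 2 + σ' ^ 2) with hm_def
  have hsum : (0:ℝ) < σ ^ 2 + σ' ^ 2 := by positivity
  have hs2 : s ^ 2 = σ ^ 2 + σ' ^ 2 := Real.sq_sqrt hsum.le
  have hspos : 0 < s := Real.sqrt_pos.mpr hsum
  have hτ2pos : 0 < τ2 := by positivity
  have hcoe1 : ((Real.toNNReal (σ' ^ 2)) : ℝ) = σ' ^ 2 :=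
    Real.coe_toNNReal _ (sq_nonneg σ')
  have hcoe2 : ((Real.toNNReal τ2) : ℝ) = τ2 := Real.coe_toNNReal _ hτ2pos.le
  rw [gaussianPDFReal, gaussianPDFReal, phi_def, phi_def, hcoe1, hcoe2]
  have hsqrt : Real.sqrt (2 * π * τ2) = Real.sqrt (2 * π * σ' ^ 2) * (σ / s) := by
    have h1 : 2 * π * τ2 = (2 * π * σ' ^ 2) * (σ / s) ^ 2 := by
      rw [div_pow, hs2, hτ2_def]; field_simp
    rw [h1, Real.sqrt_mul (by positivity), Real.sqrt_sq (by positivity)]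
  have hconst : σ⁻¹ * (Real.sqrt (2 * π))⁻¹ * (Real.sqrt (2 * π * σ' ^ 2))⁻¹
      = s⁻¹ * (Real.sqrt (2 * π))⁻¹ * (Real.sqrt (2 * π * τ2))⁻¹ := by
    rw [hsqrt]
    have h2 : Real.sqrt (2 * π * σ' ^ 2) ≠ 0 := by positivity
    field_simp
  have hexp : Real.exp (-((c - x) / σ) ^ 2 / 2) * Real.exp (-(x - μ') ^ 2 / (2 * σ' ^ 2))
      = Real.exp (-((c - μ') / s) ^ 2 / 2) * Real.exp (-(x - m) ^ 2 / (2 * τ2)) := by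
    rw [← Real.exp_add, ← Real.exp_add]
    congr 1
    have h3 : ((c - μ') / s) ^ 2 = (c - μ') ^ 2 / (σ ^ 2 + σ' ^ 2) := by
      rw [div_pow, hs2]
    rw [h3, hτ2_def, hm_def, div_pow]
    field_simp
    ring
  calc σ⁻¹ * ((Real.sqrt (2 * π))⁻¹ * Real.exp (-((c - x) / σ) ^ 2 / 2))
      * ((Real.sqrt (2 * π * σ' ^ 2))⁻¹ * Real.exp (-(x - μ') ^ 2 / (2 * σ' ^ 2)))
      = (σ⁻¹ * (Real.sqrt (2 * π))⁻¹ * (Real.sqrt (2 * π * σ' ^ 2))⁻¹)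
        * (Real.exp (-((c - x) / σ) ^ 2 / 2) * Real.exp (-(x - μ') ^ 2 / (2 * σ' ^ 2))) := by
          ring
    _ = (s⁻¹ * (Real.sqrt (2 * π))⁻¹ * (Real.sqrt (2 * π * τ2))⁻¹)
        * (Real.exp (-((c - μ') / s) ^ 2 / 2) * Real.exp (-(x - m) ^ 2 / (2 * τ2))) := by
          rw [hconst, hexp]
    _ = _ := by ring

lemma integral_key (μ' σ σ' c : ℝ) (hσ : 0 < σ) (hσ' : 0 < σ') :
    ∫ x, σ⁻¹ * phi ((c - x) / σ) ∂(gaussianReal μ' (Real.toNNReal (σ' ^ 2)))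
      = (Real.sqrt (σ ^ 2 + σ' ^ 2))⁻¹ * phi ((c - μ') / Real.sqrt (σ ^ 2 + σ' ^ 2)) := by
  have hv' : Real.toNNReal (σ' ^ 2) ≠ 0 := by
    simp only [ne_eq, Real.toNNReal_eq_zero, not_le]
    positivity
  have hτv : Real.toNNReal (σ ^ 2 * σ' ^ 2 / (σ ^ 2 + σ' ^ 2)) ≠ 0 := by
    simp only [ne_eq, Real.toNNReal_eq_zero, not_le]
    positivity
  rw [gaussianReal_of_var_ne_zero _ hv']
  have hd : gaussianPDF μ' (Real.toNNReal (σ' ^ 2))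
      = fun x => ((Real.toNNReal (gaussianPDFReal μ' (Real.toNNReal (σ' ^ 2)) x) : ℝ≥0) : ℝ≥0∞) :=
    rfl
  rw [hd, integral_withDensity_eq_integral_smul
    ((measurable_gaussianPDFReal _ _).real_toNNReal)]
  have hpt : ∀ x : ℝ,
      (Real.toNNReal (gaussianPDFReal μ' (Real.toNNReal (σ' ^ 2)) x))
          • (σ⁻¹ * phi ((c - x) / σ))
      = ((Real.sqrt (σ ^ 2 + σ' ^ 2))⁻¹ * phi ((c - μ') / Real.sqrt (σ ^ 2 + σ' ^ 2)))
        * gaussianPDFReal ((σ' ^ 2 * c + σ ^ 2 * μ') / (σ ^ 2 + σ' ^ 2))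
            (Real.toNNReal (σ ^ 2 * σ' ^ 2 / (σ ^ 2 + σ' ^ 2))) x := by
    intro x
    rw [NNReal.smul_def, smul_eq_mul, Real.coe_toNNReal _ (gaussianPDFReal_nonneg _ _ _)]
    rw [show gaussianPDFReal μ' (Real.toNNReal (σ' ^ 2)) x * (σ⁻¹ * phi ((c - x) / σ))
        = σ⁻¹ * phi ((c - x) / σ) * gaussianPDFReal μ' (Real.toNNReal (σ' ^ 2)) x by ring,
      conv_density μ' σ σ' c x hσ hσ']
  simp_rw [hpt]
  rw [integral_const_mul, integral_gaussianPDFReal_eq_one _ hτv, mul_one]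

lemma main (μ μ' σ σ' : ℝ) (hσ : 0 < σ) (hσ' : 0 < σ') :
    ∫ x, stdGaussianCDF ((μ - x) / σ) ∂(gaussianReal μ' (Real.toNNReal (σ' ^ 2)))
      = stdGaussianCDF ((μ - μ') / Real.sqrt (σ ^ 2 + σ' ^ 2)) := by
  set P' := gaussianReal μ' (Real.toNNReal (σ' ^ 2)) with hP'
  set s := Real.sqrt (σ ^ 2 + σ' ^ 2) with hs_def
  have hsum : (0:ℝ) < σ ^ 2 + σ' ^ 2 := by positivity
  have hspos : 0 < s := Real.sqrt_pos.mpr hsum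
  set F : ℝ → ℝ := fun c => ∫ x, stdGaussianCDF ((c - x) / σ) ∂P' with hF
  set H : ℝ → ℝ := fun c => stdGaussianCDF ((c - μ') / s) with hH
  have hinner : ∀ c : ℝ, Continuous (fun x : ℝ => (c - x) / σ) := fun c =>
    (continuous_const.sub continuous_id).div_const σ
  have hmeas : ∀ c : ℝ, AEStronglyMeasurable (fun x => stdGaussianCDF ((c - x) / σ)) P' :=
    fun c => (Phi_cont.comp (hinner c)).aestronglyMeasurable
  have hint : ∀ c : ℝ, Integrable (fun x => stdGaussianCDF ((c - x) / σ)) P' := fun c =>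
    (integrable_const (1:ℝ)).mono' (hmeas c) (ae_of_all _ fun x => by
      rw [Real.norm_eq_abs, abs_of_nonneg (Phi_nonneg _)]; exact Phi_le_one _)
  have hchain : ∀ (x t : ℝ), HasDerivAt (fun u : ℝ => stdGaussianCDF ((u - x) / σ))
      (σ⁻¹ * phi ((t - x) / σ)) t := by
    intro x t
    have h1 : HasDerivAt (fun u : ℝ => (u - x) / σ) σ⁻¹ t := by
      simpa [one_div] using ((hasDerivAt_id t).sub_const x).div_const σ
    simpa [mul_comm, Function.comp_def] using (Phi_hasDeriv ((t - x) / σ)).comp t h1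
  have hFderiv : ∀ c : ℝ, HasDerivAt F (s⁻¹ * phi ((c - μ') / s)) c := by
    intro c
    have h := hasDerivAt_integral_of_dominated_loc_of_deriv_le (μ := P') (x₀ := c)
      (F := fun c x => stdGaussianCDF ((c - x) / σ))
      (F' := fun c x => σ⁻¹ * phi ((c - x) / σ))
      (bound := fun _ => σ⁻¹ * (Real.sqrt (2 * π))⁻¹)
      (Metric.ball_mem_nhds c one_pos)
      (Eventually.of_forall hmeas) (hint c)
      (((phi_cont.comp (hinner c)).aestronglyMeasurable).const_mul _)
      (ae_of_all _ fun x t _ => by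
        rw [Real.norm_eq_abs,
          abs_of_nonneg (mul_nonneg (inv_nonneg.mpr hσ.le) (phi_nonneg _))]
        exact mul_le_mul_of_nonneg_left (phi_le _) (inv_nonneg.mpr hσ.le))
      (integrable_const _)
      (ae_of_all _ fun x t _ => hchain x t)
    have h2 := h.2
    rwa [integral_key μ' σ σ' c hσ hσ'] at h2
  have hHderiv : ∀ c : ℝ, HasDerivAt H (s⁻¹ * phi ((c - μ') / s)) c := by
    intro c
    have h1 : HasDerivAt (fun u : ℝ => (u - μ') / s) s⁻¹ c := by
      simpa [one_div] using ((hasDerivAt_id c).sub_const μ').div_const s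
    simpa [mul_comm, Function.comp_def] using (Phi_hasDeriv ((c - μ') / s)).comp c h1
  have hD : ∀ c : ℝ, HasDerivAt (fun c => F c - H c) 0 c := fun c => by
    have h := (hFderiv c).sub (hHderiv c); rw [sub_self] at h; exact h
  have hconst : ∀ c : ℝ, F c - H c = F μ - H μ := fun c =>
    is_const_of_deriv_eq_zero (fun t => (hD t).differentiableAt) (fun t => (hD t).deriv) c μ
  have hlin : ∀ x : ℝ, Tendsto (fun c : ℝ => (c - x) / σ) atBot atBot := by
    intro x
    have h1 : Tendsto (fun c : ℝ => c - x) atBot atBot :=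
      tendsto_atBot_add_const_right atBot (-x) tendsto_id
    simpa [div_eq_mul_inv] using h1.atBot_mul_const (inv_pos.mpr hσ)
  have hlin' : Tendsto (fun c : ℝ => (c - μ') / s) atBot atBot := by
    have h1 : Tendsto (fun c : ℝ => c - μ') atBot atBot :=
      tendsto_atBot_add_const_right atBot (-μ') tendsto_id
    simpa [div_eq_mul_inv] using h1.atBot_mul_const (inv_pos.mpr hspos)
  have hFlim : Tendsto F atBot (𝓝 0) := by
    have := MeasureTheory.tendsto_integral_filter_of_dominated_convergence (μ := P')
      (F := fun c x => stdGaussianCDF ((c - x) / σ)) (f := fun _ => (0:ℝ))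
      (fun _ => (1:ℝ))
      (Eventually.of_forall hmeas)
      (Eventually.of_forall fun c => ae_of_all _ fun x => by
        rw [Real.norm_eq_abs, abs_of_nonneg (Phi_nonneg _)]; exact Phi_le_one _)
      (integrable_const 1)
      (ae_of_all _ fun x => Phi_tendsto_atBot.comp (hlin x))
    simpa using this
  have hHlim : Tendsto H atBot (𝓝 0) := Phi_tendsto_atBot.comp hlin'
  have h0 : Tendsto (fun c => F c - H c) atBot (𝓝 0) := by
    simpa using hFlim.sub hHlim
  have h0' : Tendsto (fun c => F c - H c) atBot (𝓝 (F μ - H μ)) := by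
    rw [show (fun c => F c - H c) = fun _ => F μ - H μ from funext hconst]
    exact tendsto_const_nhds
  have hFH : F μ - H μ = 0 := tendsto_nhds_unique h0' h0
  have : F μ = H μ := by linarith
  exact this

end EPV

/-- Exact normal version of the expected P-value formula (equation (8), Sackrowitz
and Samuel-Cahn): if `X ~ N(μ', σ'²)`, then
`E[1 - Φ((X - μ)/σ)] = Φ((μ - μ')/√(σ² + σ'²))`. -/
theorem expected_pvalue_normal
    {Ω : Type*} [MeasurableSpace Ω] (P : Measure Ω) [IsProbabilityMeasure P]
    (μ μ' σ σ' : ℝ) (hσ : 0 < σ) (hσ' : 0 < σ')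
    (X : Ω → ℝ) (hX : Measurable X)
    (hXd : P.map X = gaussianReal μ' (Real.toNNReal (σ' ^ 2))) :
    ∫ ω, (1 - stdGaussianCDF ((X ω - μ) / σ)) ∂P =
      stdGaussianCDF ((μ - μ') / Real.sqrt (σ ^ 2 + σ' ^ 2)) := by
  have hg : Continuous (fun x : ℝ => 1 - stdGaussianCDF ((x - μ) / σ)) :=
    continuous_const.sub (EPV.Phi_cont.comp ((continuous_id.sub continuous_const).div_const σ))
  calc ∫ ω, (1 - stdGaussianCDF ((X ω - μ) / σ)) ∂P
      = ∫ x, (1 - stdGaussianCDF ((x - μ) / σ)) ∂(P.map X) :=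
        (integral_map hX.aemeasurable hg.aestronglyMeasurable).symm
    _ = ∫ x, stdGaussianCDF ((μ - x) / σ) ∂(gaussianReal μ' (Real.toNNReal (σ' ^ 2))) := by
        rw [hXd]
        refine integral_congr_ae (ae_of_all _ fun x => ?_)
        simp only []
        rw [EPV.one_sub_Phi]
        congr 1
        rw [← neg_div, neg_sub]
    _ = stdGaussianCDF ((μ - μ') / Real.sqrt (σ ^ 2 + σ' ^ 2)) := EPV.main μ μ' σ σ' hσ hσ'
end
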